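/- Let 0 < β ≤ 1/2, 0 < γ ≤ 1/2, and let ℓ, n be integers with 2 ≤ ℓ ≤ β²γ²·n. Fix a partial transversal U of the ℓ-lift vertex set with |U| ≥ 2β·√(nℓ), and fix a subset V of vertices with |V| ≥ 5γ·nℓ. Then for a uniformly random ℓ-lift G of K_n, the probability that |N(U) ∩ V| < γ·nℓ is at most e^{−γ³·n·|U|/4}. -/

import Mathlib

open Finset



section AuxPerm
variable {ℓ : ℕ}

lemma perm_fiber_card (a b c : Fin ℓ) :
    (univ.filter fun π : Equiv.Perm (Fin ℓ) => π a = b).card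
      = (univ.filter fun π : Equiv.Perm (Fin ℓ) => π a = c).card := by
  apply Finset.card_bij (fun π _ => Equiv.swap b c * π)
  · intro π hπ
    simp only [mem_filter, mem_univ, true_and] at hπ ⊢
    simp [hπ]
  · intro π hπ π' hπ' h
    exact mul_left_cancel h
  · intro π hπ
    simp only [mem_filter, mem_univ, true_and] at hπ ⊢
    refine ⟨Equiv.swap b c * π, ?_, ?_⟩
    · simp [hπ, Equiv.swap_apply_right]
    · rw [← mul_assoc]; simp

lemma perm_fiber_card_mul (a b : Fin ℓ) :
    (univ.filter fun π : Equiv.Perm (Fin ℓ) => π a = b).card * ℓ = Nat.factorial ℓ := by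
  have h := Finset.card_eq_sum_card_fiberwise
    (f := fun π : Equiv.Perm (Fin ℓ) => π a) (s := univ) (t := univ)
    (fun π _ => mem_univ _)
  rw [Finset.card_univ, Fintype.card_perm, Fintype.card_fin] at h
  have h2 : ∀ c : Fin ℓ, (univ.filter fun π : Equiv.Perm (Fin ℓ) => π a = c).card
      = (univ.filter fun π : Equiv.Perm (Fin ℓ) => π a = b).card :=
    fun c => perm_fiber_card a c b
  rw [Finset.sum_congr rfl (fun c _ => h2 c), Finset.sum_const, Finset.card_univ,
    Fintype.card_fin, smul_eq_mul] at h
  rw [mul_comm]; omega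

lemma perm_avoid_card_mul (a : Fin ℓ) (s : Finset (Fin ℓ)) :
    (univ.filter fun π : Equiv.Perm (Fin ℓ) => π a ∉ s).card * ℓ + s.card * Nat.factorial ℓ
      = ℓ * Nat.factorial ℓ := by
  have hin : (univ.filter fun π : Equiv.Perm (Fin ℓ) => π a ∈ s).card
      = s.card * (univ.filter fun π : Equiv.Perm (Fin ℓ) => π a = a).card := by
    have h := Finset.card_eq_sum_card_fiberwise
      (f := fun π : Equiv.Perm (Fin ℓ) => π a)
      (s := univ.filter fun π : Equiv.Perm (Fin ℓ) => π a ∈ s) (t := s)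
      (fun π hπ => (mem_filter.mp hπ).2)
    rw [h]
    have : ∀ c ∈ s, ((univ.filter fun π : Equiv.Perm (Fin ℓ) => π a ∈ s).filter
        (fun π => π a = c)).card = (univ.filter fun π : Equiv.Perm (Fin ℓ) => π a = a).card := by
      intro c hc
      rw [Finset.filter_filter]
      have : (univ.filter fun π : Equiv.Perm (Fin ℓ) => π a ∈ s ∧ π a = c)
          = univ.filter fun π : Equiv.Perm (Fin ℓ) => π a = c := by
        apply Finset.filter_congr; intro π _
        constructor
        · exact fun h => h.2
        · exact fun h => ⟨h ▸ hc, h⟩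
      rw [this]
      exact perm_fiber_card a c a
    rw [Finset.sum_congr rfl this, Finset.sum_const, smul_eq_mul]
  have hsplit : (univ.filter fun π : Equiv.Perm (Fin ℓ) => π a ∉ s).card
      + (univ.filter fun π : Equiv.Perm (Fin ℓ) => π a ∈ s).card = Nat.factorial ℓ := by
    rw [add_comm, Finset.card_filter_add_card_filter_not]
    rw [Finset.card_univ, Fintype.card_perm, Fintype.card_fin]
  have hfib := perm_fiber_card_mul a a
  have h3 : (univ.filter fun π : Equiv.Perm (Fin ℓ) => π a ∈ s).card * ℓ
      = s.card * Nat.factorial ℓ := by rw [hin, mul_assoc, hfib]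
  calc (univ.filter fun π : Equiv.Perm (Fin ℓ) => π a ∉ s).card * ℓ + s.card * Nat.factorial ℓ
      = (univ.filter fun π : Equiv.Perm (Fin ℓ) => π a ∉ s).card * ℓ
        + (univ.filter fun π : Equiv.Perm (Fin ℓ) => π a ∈ s).card * ℓ := by rw [h3]
    _ = ((univ.filter fun π : Equiv.Perm (Fin ℓ) => π a ∉ s).card
        + (univ.filter fun π : Equiv.Perm (Fin ℓ) => π a ∈ s).card) * ℓ := by ring
    _ = ℓ * Nat.factorial ℓ := by rw [hsplit]; ring

lemma perm_avoid_inv_card (b : Fin ℓ) (s : Finset (Fin ℓ)) :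
    (univ.filter fun π : Equiv.Perm (Fin ℓ) => π⁻¹ b ∉ s).card
      = (univ.filter fun π : Equiv.Perm (Fin ℓ) => π b ∉ s).card := by
  apply Finset.card_bij (fun π _ => π⁻¹)
  · intro π hπ
    simp only [mem_filter, mem_univ, true_and] at hπ ⊢
    exact hπ
  · intro π _ π' _ h
    exact inv_injective h
  · intro π hπ
    simp only [mem_filter, mem_univ, true_and] at hπ ⊢
    exact ⟨π⁻¹, by simpa using hπ, by simp⟩

/-- Real-valued bound: number of permutations avoiding `s` at `a` is at most
`exp(-|s|/ℓ) * ℓ!`. -/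
lemma perm_avoid_card_le (hℓ : 0 < ℓ) (a : Fin ℓ) (s : Finset (Fin ℓ)) :
    ((univ.filter fun π : Equiv.Perm (Fin ℓ) => π a ∉ s).card : ℝ)
      ≤ Real.exp (-(s.card : ℝ) / ℓ) * Nat.factorial ℓ := by
  rw [neg_div]
  have h := perm_avoid_card_mul a s
  have hℓR : (0:ℝ) < ℓ := by exact_mod_cast hℓ
  have hF : (0:ℝ) < Nat.factorial ℓ := by exact_mod_cast Nat.factorial_pos ℓ
  have hcast : ((univ.filter fun π : Equiv.Perm (Fin ℓ) => π a ∉ s).card : ℝ) * ℓ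
      + s.card * Nat.factorial ℓ = ℓ * Nat.factorial ℓ := by exact_mod_cast h
  have hexp : 1 - (s.card : ℝ) / ℓ ≤ Real.exp (-((s.card : ℝ) / ℓ)) := by
    have := Real.add_one_le_exp (-(s.card : ℝ) / ℓ)
    rw [neg_div] at this
    linarith
  have hcard : ((univ.filter fun π : Equiv.Perm (Fin ℓ) => π a ∉ s).card : ℝ)
      = (1 - (s.card : ℝ) / ℓ) * Nat.factorial ℓ := by
    field_simp
    nlinarith [hcast]
  rw [hcard]
  have : (0:ℝ) ≤ Nat.factorial ℓ := le_of_lt hF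
  nlinarith [hexp]

end AuxPerm



section LiftAux
variable {n ℓ : ℕ}

/-- Number of elements of `T` in fiber `j`. -/
def tfun (T : Finset (Fin n × Fin ℓ)) (j : Fin n) : ℕ := (T.filter fun p => p.1 = j).card

/-- The second coordinates of elements of `T` in fiber `j`. -/
def fibset (T : Finset (Fin n × Fin ℓ)) (j : Fin n) : Finset (Fin ℓ) :=
  (T.filter fun p => p.1 = j).image Prod.snd

lemma mem_fibset {T : Finset (Fin n × Fin ℓ)} {j : Fin n} {b : Fin ℓ} :
    b ∈ fibset T j ↔ (j, b) ∈ T := by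
  simp only [fibset, mem_image, mem_filter]
  constructor
  · rintro ⟨⟨j', b'⟩, ⟨hmem, rfl⟩, rfl⟩
    exact hmem
  · intro h
    exact ⟨(j, b), ⟨h, rfl⟩, rfl⟩

lemma fibset_card (T : Finset (Fin n × Fin ℓ)) (j : Fin n) :
    (fibset T j).card = tfun T j := by
  apply Finset.card_image_of_injOn
  rintro ⟨j₁, b₁⟩ h₁ ⟨j₂, b₂⟩ h₂ h
  simp only [mem_coe, mem_filter] at h₁ h₂
  simp only at h
  exact Prod.ext (h₁.2.trans h₂.2.symm) h

lemma fibset_card_le (T : Finset (Fin n × Fin ℓ)) (j : Fin n) :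
    (fibset T j).card ≤ ℓ := by
  simpa using Finset.card_le_univ (fibset T j)

lemma tfun_le (T : Finset (Fin n × Fin ℓ)) (j : Fin n) : tfun T j ≤ ℓ := by
  rw [← fibset_card]; exact fibset_card_le T j

lemma tfun_sum (T : Finset (Fin n × Fin ℓ)) : ∑ j, tfun T j = T.card :=
  (Finset.card_eq_sum_card_fiberwise (f := Prod.fst) (s := T) (t := univ)
    (fun p _ => mem_univ _)).symm

open Classical in
/-- Allowed permutations at coordinate `(i,j)` so that the designated neighbor point
of the transversal avoids `T`. -/
noncomputable def Afin (Uf T : Finset (Fin n × Fin ℓ)) (i j : Fin n) :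
    Finset (Equiv.Perm (Fin ℓ)) :=
  if i < j then
    (if h : ∃ a, (i, a) ∈ Uf then univ.filter fun π => π h.choose ∉ fibset T j
     else if h' : ∃ b, (j, b) ∈ Uf then univ.filter fun π => π⁻¹ h'.choose ∉ fibset T i
     else univ)
  else univ

/-- The weight (size of the relevant fiber of `T`) of coordinate `(i,j)`. -/
def cfun (Uf T : Finset (Fin n × Fin ℓ)) (i j : Fin n) : ℕ :=
  if i < j then
    (if i ∈ Uf.image Prod.fst then tfun T j
     else if j ∈ Uf.image Prod.fst then tfun T i else 0)
  else 0

lemma Afin_card_le (hℓ : 0 < ℓ) (Uf T : Finset (Fin n × Fin ℓ)) (i j : Fin n) :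
    ((Afin Uf T i j).card : ℝ)
      ≤ Real.exp (-(cfun Uf T i j : ℝ) / ℓ) * Nat.factorial ℓ := by
  have hfact : ((univ : Finset (Equiv.Perm (Fin ℓ))).card : ℝ) = Nat.factorial ℓ := by
    rw [Finset.card_univ, Fintype.card_perm, Fintype.card_fin]
  by_cases hij : i < j
  · by_cases hi : ∃ a, (i, a) ∈ Uf
    · have hiI : i ∈ Uf.image Prod.fst := mem_image.mpr ⟨(i, hi.choose), hi.choose_spec, rfl⟩
      rw [Afin, if_pos hij, dif_pos hi, cfun, if_pos hij, if_pos hiI, ← fibset_card]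
      exact perm_avoid_card_le hℓ hi.choose (fibset T j)
    · have hiI : i ∉ Uf.image Prod.fst := by
        intro h
        obtain ⟨p, hp, hfst⟩ := mem_image.mp h
        exact hi ⟨p.2, by rw [← hfst]; exact hp⟩
      by_cases hj : ∃ b, (j, b) ∈ Uf
      · have hjI : j ∈ Uf.image Prod.fst := mem_image.mpr ⟨(j, hj.choose), hj.choose_spec, rfl⟩
        rw [Afin, if_pos hij, dif_neg hi, dif_pos hj, cfun, if_pos hij, if_neg hiI,
          if_pos hjI, ← fibset_card, perm_avoid_inv_card]
        exact perm_avoid_card_le hℓ hj.choose (fibset T i)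
      · have hjI : j ∉ Uf.image Prod.fst := by
          intro h
          obtain ⟨p, hp, hfst⟩ := mem_image.mp h
          exact hj ⟨p.2, by rw [← hfst]; exact hp⟩
        rw [Afin, if_pos hij, dif_neg hi, dif_neg hj, cfun, if_pos hij, if_neg hiI,
          if_neg hjI, hfact]
        simp
  · rw [Afin, if_neg hij, cfun, if_neg hij, hfact]
    simp

open Classical in
lemma count_prod (Uf T : Finset (Fin n × Fin ℓ)) :
    (univ.filter fun σ : Fin n → Fin n → Equiv.Perm (Fin ℓ) =>
        ∀ i j, σ i j ∈ Afin Uf T i j).card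
      = ∏ i, ∏ j, (Afin Uf T i j).card := by
  have he : (univ.filter fun σ : Fin n → Fin n → Equiv.Perm (Fin ℓ) =>
        ∀ i j, σ i j ∈ Afin Uf T i j)
      = Fintype.piFinset (fun i => Fintype.piFinset fun j => Afin Uf T i j) := by
    ext σ
    simp [Fintype.mem_piFinset]
  rw [he, Fintype.card_piFinset]
  exact Finset.prod_congr rfl fun i _ => Fintype.card_piFinset _

lemma choose_le_two_pow (v m : ℕ) : v.choose m ≤ 2 ^ v := by
  by_cases h : m ≤ v
  · calc v.choose m ≤ ∑ k ∈ Finset.range (v + 1), v.choose k :=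
        Finset.single_le_sum (fun k _ => Nat.zero_le _)
          (Finset.mem_range.mpr (Nat.lt_succ_of_le h))
    _ = 2 ^ v := Nat.sum_range_choose v
  · rw [Nat.choose_eq_zero_of_lt (lt_of_not_ge h)]
    exact Nat.zero_le _

end LiftAux
section SumArith
variable {n ℓ : ℕ}

/-- Rank of a fiber among the fibers met by `Uf`. -/
def rankf (Uf : Finset (Fin n × Fin ℓ)) (j : Fin n) : ℕ :=
  ((Uf.image Prod.fst).filter fun i => i < j).card

/-- Number of designated points landing in fiber `j`. -/
def dfun (Uf : Finset (Fin n × Fin ℓ)) (j : Fin n) : ℕ :=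
  if j ∈ Uf.image Prod.fst then rankf Uf j else (Uf.image Prod.fst).card

lemma rank_corank (Uf : Finset (Fin n × Fin ℓ)) {j : Fin n}
    (hj : j ∉ Uf.image Prod.fst) :
    ((Uf.image Prod.fst).filter fun i => i < j).card
      + ((Uf.image Prod.fst).filter fun i => j < i).card = (Uf.image Prod.fst).card := by
  have hfe : (Uf.image Prod.fst).filter (fun i => j < i)
      = (Uf.image Prod.fst).filter (fun i => ¬ i < j) := by
    apply Finset.filter_congr
    intro i hi
    have hne : i ≠ j := fun h => hj (h ▸ hi)
    simp only [not_lt, eq_iff_iff]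
    constructor
    · exact fun h => le_of_lt h
    · intro h
      rcases lt_or_eq_of_le h with h' | h'
      · exact h'
      · exact absurd h'.symm hne
  rw [hfe, Finset.card_filter_add_card_filter_not (p := fun i => i < j)]

lemma cfun_sum_ge (Uf T : Finset (Fin n × Fin ℓ)) :
    ∑ j, tfun T j * dfun Uf j ≤ ∑ i, ∑ j, cfun Uf T i j := by
  classical
  have hsplit : ∀ i j : Fin n, cfun Uf T i j =
      (if i ∈ Uf.image Prod.fst ∧ i < j then tfun T j else 0)
        + (if i ∉ Uf.image Prod.fst ∧ j ∈ Uf.image Prod.fst ∧ i < j then tfun T i else 0) := by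
    intro i j
    rw [cfun]
    by_cases hij : i < j <;> by_cases hi : i ∈ Uf.image Prod.fst <;>
      by_cases hjm : j ∈ Uf.image Prod.fst <;> simp [hij, hi, hjm]
  have h1 : ∑ i, ∑ j, cfun Uf T i j
      = (∑ j, ∑ i, (if i ∈ Uf.image Prod.fst ∧ i < j then tfun T j else 0))
        + ∑ i, ∑ j, (if i ∉ Uf.image Prod.fst ∧ j ∈ Uf.image Prod.fst ∧ i < j
            then tfun T i else 0) := by
    rw [Finset.sum_comm
      (f := fun j i => if i ∈ Uf.image Prod.fst ∧ i < j then tfun T j else 0)]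
    rw [← Finset.sum_add_distrib]
    apply Finset.sum_congr rfl
    intro i _
    rw [← Finset.sum_add_distrib]
    exact Finset.sum_congr rfl fun j _ => hsplit i j
  have h2 : ∀ j : Fin n, ∑ i, (if i ∈ Uf.image Prod.fst ∧ i < j then tfun T j else 0)
      = ((Uf.image Prod.fst).filter fun i => i < j).card * tfun T j := by
    intro j
    have he : ((Uf.image Prod.fst).filter fun i => i < j)
        = Finset.univ.filter fun i => i ∈ Uf.image Prod.fst ∧ i < j := by
      ext i; simp
    rw [he, ← Finset.sum_filter, Finset.sum_const, smul_eq_mul]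
  have h3 : ∀ i : Fin n, ∑ j, (if i ∉ Uf.image Prod.fst ∧ j ∈ Uf.image Prod.fst ∧ i < j
        then tfun T i else 0)
      = (if i ∉ Uf.image Prod.fst
          then ((Uf.image Prod.fst).filter fun j => i < j).card * tfun T i else 0) := by
    intro i
    by_cases hi : i ∈ Uf.image Prod.fst
    · rw [if_neg (by simpa using hi)]
      apply Finset.sum_eq_zero
      intro j _
      rw [if_neg (by tauto)]
    · rw [if_pos hi]
      have he : ((Uf.image Prod.fst).filter fun j => i < j)
          = Finset.univ.filter fun j =>
              i ∉ Uf.image Prod.fst ∧ j ∈ Uf.image Prod.fst ∧ i < j := by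
        ext j; simp [hi]
      rw [he, ← Finset.sum_filter, Finset.sum_const, smul_eq_mul]
  have h4 : ∀ j : Fin n, tfun T j * dfun Uf j
      = ((Uf.image Prod.fst).filter fun i => i < j).card * tfun T j
        + (if j ∉ Uf.image Prod.fst
            then ((Uf.image Prod.fst).filter fun i => j < i).card * tfun T j else 0) := by
    intro j
    by_cases hjm : j ∈ Uf.image Prod.fst
    · rw [dfun, if_pos hjm, if_neg (by simpa using hjm), rankf]
      ring
    · rw [dfun, if_neg hjm, if_pos hjm, ← rank_corank Uf hjm]
      ring
  rw [h1]
  apply le_of_eq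
  calc ∑ j, tfun T j * dfun Uf j
      = ∑ j, (((Uf.image Prod.fst).filter fun i => i < j).card * tfun T j
        + (if j ∉ Uf.image Prod.fst
            then ((Uf.image Prod.fst).filter fun i => j < i).card * tfun T j else 0)) :=
        Finset.sum_congr rfl fun j _ => h4 j
    _ = (∑ j, ((Uf.image Prod.fst).filter fun i => i < j).card * tfun T j)
        + ∑ j, (if j ∉ Uf.image Prod.fst
            then ((Uf.image Prod.fst).filter fun i => j < i).card * tfun T j else 0) :=
        Finset.sum_add_distrib
    _ = (∑ j, ∑ i, (if i ∈ Uf.image Prod.fst ∧ i < j then tfun T j else 0))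
        + ∑ i, ∑ j, (if i ∉ Uf.image Prod.fst ∧ j ∈ Uf.image Prod.fst ∧ i < j
            then tfun T i else 0) := by
        rw [Finset.sum_congr rfl fun j (_ : j ∈ Finset.univ) => (h2 j).symm,
          Finset.sum_congr rfl fun i (_ : i ∈ Finset.univ) => (h3 i).symm]

end SumArith
section LowFiber
variable {n ℓ : ℕ}

lemma rankf_strictmono (Uf : Finset (Fin n × Fin ℓ)) {i j : Fin n}
    (hi : i ∈ Uf.image Prod.fst) (hij : i < j) : rankf Uf i < rankf Uf j := by
  apply Finset.card_lt_card
  constructor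
  · intro k hk
    rw [Finset.mem_filter] at hk ⊢
    exact ⟨hk.1, lt_trans hk.2 hij⟩
  · intro hsub
    have : i ∈ (Uf.image Prod.fst).filter fun k => k < j :=
      Finset.mem_filter.mpr ⟨hi, hij⟩
    have := hsub this
    rw [Finset.mem_filter] at this
    exact lt_irrefl i this.2

lemma card_low_le (Uf : Finset (Fin n × Fin ℓ)) (K : ℕ)
    (hK : K ≤ (Uf.image Prod.fst).card) :
    (Finset.univ.filter fun j : Fin n => dfun Uf j < K).card ≤ K := by
  classical
  have hmaps : ∀ j ∈ Finset.univ.filter fun j : Fin n => dfun Uf j < K,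
      rankf Uf j ∈ Finset.range K := by
    intro j hj
    rw [Finset.mem_filter] at hj
    rw [Finset.mem_range]
    rcases Finset.decidableMem j (Uf.image Prod.fst) with hjm | hjm
    · rw [dfun, if_neg hjm] at hj
      omega
    · rw [dfun, if_pos hjm] at hj
      exact hj.2
  have hinj : Set.InjOn (rankf Uf)
      ↑(Finset.univ.filter fun j : Fin n => dfun Uf j < K) := by
    intro a ha b hb hab
    rw [Finset.coe_filter, Set.mem_setOf_eq] at ha hb
    have haI : a ∈ Uf.image Prod.fst := by
      by_contra h
      rw [dfun, if_neg h] at ha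
      omega
    have hbI : b ∈ Uf.image Prod.fst := by
      by_contra h
      rw [dfun, if_neg h] at hb
      omega
    rcases lt_trichotomy a b with h | h | h
    · exact absurd hab (Nat.ne_of_lt (rankf_strictmono Uf haI h))
    · exact h
    · exact absurd hab.symm (Nat.ne_of_lt (rankf_strictmono Uf hbI h))
  simpa using Finset.card_le_card_of_injOn (rankf Uf) hmaps hinj

/-- Key lower bound on the weighted sum `∑ t_j d_j`. -/
lemma sum_td_ge (Uf T : Finset (Fin n × Fin ℓ)) (K : ℕ)
    (hK : K ≤ (Uf.image Prod.fst).card) :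
    (K : ℝ) * ((T.card : ℝ) - K * ℓ) ≤ (∑ j, tfun T j * dfun Uf j : ℕ) := by
  classical
  set L := Finset.univ.filter fun j : Fin n => dfun Uf j < K with hL
  have hLsum : ∑ j ∈ L, tfun T j ≤ K * ℓ := by
    calc ∑ j ∈ L, tfun T j ≤ ∑ _j ∈ L, ℓ := Finset.sum_le_sum fun j _ => tfun_le T j
      _ = L.card * ℓ := by rw [Finset.sum_const, smul_eq_mul]
      _ ≤ K * ℓ := Nat.mul_le_mul_right ℓ (card_low_le Uf K hK)
  have hHsum : K * (∑ j ∈ Finset.univ.filter (fun j => ¬ dfun Uf j < K), tfun T j)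
      ≤ ∑ j ∈ Finset.univ.filter (fun j => ¬ dfun Uf j < K), tfun T j * dfun Uf j := by
    rw [Finset.mul_sum]
    apply Finset.sum_le_sum
    intro j hj
    rw [Finset.mem_filter] at hj
    have := Nat.le_of_not_lt hj.2
    calc K * tfun T j ≤ dfun Uf j * tfun T j := Nat.mul_le_mul_right _ this
      _ = tfun T j * dfun Uf j := Nat.mul_comm _ _
  have hsplit : (∑ j ∈ Finset.univ.filter (fun j => ¬ dfun Uf j < K), tfun T j)
      + ∑ j ∈ L, tfun T j = T.card := by
    rw [hL, ← tfun_sum T, add_comm]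
    exact Finset.sum_filter_add_sum_filter_not Finset.univ (fun j => dfun Uf j < K) (tfun T)
  have htotal : ∑ j ∈ Finset.univ.filter (fun j => ¬ dfun Uf j < K), tfun T j * dfun Uf j
      ≤ ∑ j, tfun T j * dfun Uf j :=
    Finset.sum_le_sum_of_subset (Finset.filter_subset _ _)
  -- now conclude over ℝ
  have c1 : ((∑ j ∈ L, tfun T j : ℕ) : ℝ) ≤ (K : ℝ) * ℓ := by exact_mod_cast hLsum
  have c2 : (K : ℝ) * ((∑ j ∈ Finset.univ.filter (fun j => ¬ dfun Uf j < K), tfun T j : ℕ) : ℝ)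
      ≤ ((∑ j ∈ Finset.univ.filter (fun j => ¬ dfun Uf j < K), tfun T j * dfun Uf j : ℕ) : ℝ) := by
    exact_mod_cast hHsum
  have c3 : ((∑ j ∈ Finset.univ.filter (fun j => ¬ dfun Uf j < K), tfun T j : ℕ) : ℝ)
      + ((∑ j ∈ L, tfun T j : ℕ) : ℝ) = (T.card : ℝ) := by exact_mod_cast hsplit
  have c4 : ((∑ j ∈ Finset.univ.filter (fun j => ¬ dfun Uf j < K), tfun T j * dfun Uf j : ℕ) : ℝ)
      ≤ ((∑ j, tfun T j * dfun Uf j : ℕ) : ℝ) := by exact_mod_cast htotal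
  have hK0 : (0:ℝ) ≤ (K : ℝ) := Nat.cast_nonneg K
  nlinarith [c1, c2, c3, c4]

end LowFiber
/-- The `ℓ`-lift of the complete graph `K_n` determined by a family of permutations
`σ` (only the values `σ i j` for `i < j` matter): vertices `(i,a)` and `(j, σ i j a)`
are adjacent for `i < j`. -/
def liftGraph (n ℓ : ℕ) (σ : Fin n → Fin n → Equiv.Perm (Fin ℓ)) :
    SimpleGraph (Fin n × Fin ℓ) :=
  SimpleGraph.fromRel (fun x y => x.1 < y.1 ∧ σ x.1 y.1 x.2 = y.2)

/-- The proportion of `ℓ`-lifts of `K_n` (all chosen uniformly at random) whose lift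
graph satisfies the property `p`. -/
noncomputable def liftProb (n ℓ : ℕ) (p : SimpleGraph (Fin n × Fin ℓ) → Prop) : ℝ :=
  ((@Finset.filter _ (fun σ : Fin n → Fin n → Equiv.Perm (Fin ℓ) => p (liftGraph n ℓ σ))
      (Classical.decPred _) Finset.univ).card : ℝ)
    / (Fintype.card (Fin n → Fin n → Equiv.Perm (Fin ℓ)) : ℝ)

/-- `N(U)`: the set of vertices that are in `U` or have a neighbor in `U`. -/
def nbhdSet {V : Type*} (G : SimpleGraph V) (U : Set V) : Set V :=
  {v | v ∈ U ∨ ∃ u ∈ U, G.Adj u v}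
set_option maxHeartbeats 12000000 in
theorem stmt14 (β γ : ℝ) (hβ0 : 0 < β) (hβ : β ≤ 1 / 2) (hγ0 : 0 < γ) (hγ : γ ≤ 1 / 2)
    (n ℓ : ℕ) (hℓ2 : 2 ≤ ℓ) (hℓn : (ℓ : ℝ) ≤ β ^ 2 * γ ^ 2 * n)
    (U V : Set (Fin n × Fin ℓ))
    (hUtrans : ∀ x ∈ U, ∀ y ∈ U, x.1 = y.1 → x = y)
    (hUcard : 2 * β * Real.sqrt (n * ℓ) ≤ (U.ncard : ℝ))
    (hVcard : 5 * γ * n * ℓ ≤ (V.ncard : ℝ)) :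
    liftProb n ℓ (fun G => ((nbhdSet G U ∩ V).ncard : ℝ) < γ * n * ℓ)
      ≤ Real.exp (-γ ^ 3 * n * U.ncard / 4) := by
  classical
  have hℓ0 : 0 < ℓ := by omega
  have hℓR : (0:ℝ) < ℓ := by exact_mod_cast hℓ0
  have hℓ2R : (2:ℝ) ≤ ℓ := by exact_mod_cast hℓ2
  have hβsq : β ^ 2 ≤ 1 / 4 := by nlinarith
  have hγsq : (8:ℝ) ≤ γ ^ 2 * n := by
    nlinarith [hℓn, hℓ2R, hβsq, mul_nonneg (sq_nonneg γ) (show (0:ℝ) ≤ n from Nat.cast_nonneg n)]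
  have hn0R : (0:ℝ) < n := by nlinarith [hγsq, sq_nonneg γ]
  have hn0 : 0 < n := by exact_mod_cast hn0R
  have hγn : (16:ℝ) ≤ γ * n := by nlinarith [hγsq, mul_pos hγ0 hn0R, hγ]
  have hℓγ : (ℓ:ℝ) ≤ γ ^ 2 * n / 4 := by nlinarith [hℓn, hβsq, mul_nonneg (sq_nonneg γ) (show (0:ℝ) ≤ n from Nat.cast_nonneg n)]
  -- finset versions of U and V
  set Uf : Finset (Fin n × Fin ℓ) := U.toFinset with hUf
  set Vf : Finset (Fin n × Fin ℓ) := V.toFinset with hVf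
  have hUU : (U.ncard : ℝ) = (Uf.card : ℝ) := by
    rw [Set.ncard_eq_toFinset_card' U]
  set u : ℕ := Uf.card with hu
  have hIcard : (Uf.image Prod.fst).card = u := by
    apply Finset.card_image_of_injOn
    intro x hx y hy hxy
    exact hUtrans x (by simpa [hUf] using hx) y (by simpa [hUf] using hy) hxy
  have huN : u ≤ n := by
    rw [← hIcard]
    simpa using Finset.card_le_univ (Uf.image Prod.fst)
  have huNR : (u:ℝ) ≤ n := by exact_mod_cast huN
  -- u ≥ 2ℓ/γ
  have hsqrt : (ℓ:ℝ) / (β * γ) ≤ Real.sqrt (n * ℓ) := by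
    rw [show (ℓ:ℝ)/(β*γ) = Real.sqrt (((ℓ:ℝ)/(β*γ))^2) from
      (Real.sqrt_sq (by positivity)).symm]
    apply Real.sqrt_le_sqrt
    rw [div_pow]
    rw [div_le_iff₀ (by positivity)]
    have : (β*γ)^2 = β^2*γ^2 := by ring
    nlinarith [hℓn, hℓR]
  have huℓ : 2 * (ℓ:ℝ) ≤ γ * u := by
    have h1 : 2 * β * ((ℓ:ℝ)/(β*γ)) ≤ 2 * β * Real.sqrt (n*ℓ) := by
      apply mul_le_mul_of_nonneg_left hsqrt (by positivity)
    have h2 : 2 * β * ((ℓ:ℝ)/(β*γ)) = 2*ℓ/γ := by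
      field_simp
    have h3 : 2*(ℓ:ℝ)/γ ≤ u := by
      rw [← h2] at *
      calc 2 * β * ((ℓ:ℝ)/(β*γ)) ≤ 2 * β * Real.sqrt (n*ℓ) := h1
        _ ≤ (U.ncard : ℝ) := hUcard
        _ = u := by rw [hUU]
    rw [div_le_iff₀ hγ0] at h3
    nlinarith [h3]
  have hu0R : (0:ℝ) < u := by nlinarith
  -- the parameters
  set m : ℕ := Nat.ceil (4*γ*n*ℓ : ℝ) with hm
  set M : ℕ := Nat.ceil (2*γ*n : ℝ) with hM
  set K : ℕ := min u M with hK
  have hmR : 4*γ*n*ℓ ≤ (m:ℝ) := Nat.le_ceil _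
  have hMR : 2*γ*n ≤ (M:ℝ) := Nat.le_ceil _
  have hKu : K ≤ u := min_le_left _ _
  -- the family of witness sets
  set 𝒯 : Finset (Finset (Fin n × Fin ℓ)) := Finset.powersetCard m Vf with h𝒯
  set D : ℕ := Fintype.card (Fin n → Fin n → Equiv.Perm (Fin ℓ)) with hD
  have hDval : D = (Nat.factorial ℓ) ^ (n * n) := by
    rw [hD, Fintype.card_fun, Fintype.card_fun, Fintype.card_perm, Fintype.card_fin,
      Fintype.card_fin, ← pow_mul]
  have hD0 : (0:ℝ) < D := by
    rw [hDval]
    positivity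
  -- Step 1: inclusion into union of avoid events
  have hsub : (@Finset.filter _
        (fun σ : Fin n → Fin n → Equiv.Perm (Fin ℓ) =>
          ((nbhdSet (liftGraph n ℓ σ) U ∩ V).ncard : ℝ) < γ * n * ℓ)
        (Classical.decPred _) Finset.univ)
      ⊆ 𝒯.biUnion (fun T => Finset.univ.filter
          (fun σ : Fin n → Fin n → Equiv.Perm (Fin ℓ) => ∀ i j, σ i j ∈ Afin Uf T i j)) := by
    intro σ hσ
    rw [Finset.mem_filter] at hσ
    have hbad : ((nbhdSet (liftGraph n ℓ σ) U ∩ V).ncard : ℝ) < γ * n * ℓ := hσ.2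
    set W : Finset (Fin n × Fin ℓ) :=
      Vf.filter (fun x => x ∉ nbhdSet (liftGraph n ℓ σ) U) with hW
    have hNVcard : (Vf.filter (fun x => x ∈ nbhdSet (liftGraph n ℓ σ) U)).card
        = (nbhdSet (liftGraph n ℓ σ) U ∩ V).ncard := by
      rw [Set.ncard_eq_toFinset_card' (nbhdSet (liftGraph n ℓ σ) U ∩ V)]
      congr 1
      ext x
      simp only [Finset.mem_filter, Set.mem_toFinset, Set.mem_inter_iff, hVf]
      tauto
    have hWsplit : (Vf.filter (fun x => x ∈ nbhdSet (liftGraph n ℓ σ) U)).card + W.card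
        = Vf.card := Finset.card_filter_add_card_filter_not _
    have hVfcard : 5*γ*n*ℓ ≤ (Vf.card : ℝ) := by
      rw [hVf, ← Set.ncard_eq_toFinset_card' V]
      exact hVcard
    have hWR : 4*γ*n*ℓ ≤ (W.card : ℝ) := by
      have h1 : ((Vf.filter (fun x => x ∈ nbhdSet (liftGraph n ℓ σ) U)).card : ℝ)
          + (W.card : ℝ) = (Vf.card : ℝ) := by exact_mod_cast hWsplit
      rw [hNVcard] at h1
      linarith
    have hmW : m ≤ W.card := by
      rw [hm]
      exact Nat.ceil_le.mpr hWR
    obtain ⟨T, hTsub, hTcard⟩ := Finset.exists_subset_card_eq hmW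
    rw [Finset.mem_biUnion]
    refine ⟨T, Finset.mem_powersetCard.mpr
      ⟨hTsub.trans (Finset.filter_subset _ _), hTcard⟩, ?_⟩
    rw [Finset.mem_filter]
    refine ⟨Finset.mem_univ _, ?_⟩
    intro i j
    by_cases hij : i < j
    · rw [Afin, if_pos hij]
      by_cases hi : ∃ a, (i, a) ∈ Uf
      · rw [dif_pos hi]
        rw [Finset.mem_filter]
        refine ⟨Finset.mem_univ _, ?_⟩
        intro hmem
        rw [mem_fibset] at hmem
        have hTW := hTsub hmem
        rw [hW, Finset.mem_filter] at hTW
        apply hTW.2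
        refine Or.inr ⟨(i, hi.choose), ?_, ?_⟩
        · exact Set.mem_toFinset.mp hi.choose_spec
        · show (liftGraph n ℓ σ).Adj _ _
          rw [liftGraph, SimpleGraph.fromRel_adj]
          refine ⟨fun h => (Fin.ne_of_lt hij) (congrArg Prod.fst h), Or.inl ⟨hij, rfl⟩⟩
      · rw [dif_neg hi]
        by_cases hj : ∃ b, (j, b) ∈ Uf
        · rw [dif_pos hj]
          rw [Finset.mem_filter]
          refine ⟨Finset.mem_univ _, ?_⟩
          intro hmem
          rw [mem_fibset] at hmem
          have hTW := hTsub hmem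
          rw [hW, Finset.mem_filter] at hTW
          apply hTW.2
          refine Or.inr ⟨(j, hj.choose), ?_, ?_⟩
          · exact Set.mem_toFinset.mp hj.choose_spec
          · show (liftGraph n ℓ σ).Adj _ _
            rw [liftGraph, SimpleGraph.fromRel_adj]
            refine ⟨fun h => (Fin.ne_of_lt hij) (congrArg Prod.fst h).symm,
              Or.inr ⟨hij, Equiv.apply_symm_apply _ _⟩⟩
        · rw [dif_neg hj]
          exact Finset.mem_univ _
    · rw [Afin, if_neg hij]
      exact Finset.mem_univ _
  -- Step 2: per-T bound
  have hperT : ∀ T ∈ 𝒯,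
      ((Finset.univ.filter
          (fun σ : Fin n → Fin n → Equiv.Perm (Fin ℓ) =>
            ∀ i j, σ i j ∈ Afin Uf T i j)).card : ℝ)
        ≤ Real.exp (-((K:ℝ) * ((m:ℝ) - (K:ℝ)*ℓ)) / ℓ) * D := by
    intro T hT
    rw [h𝒯, Finset.mem_powersetCard] at hT
    have hTm : T.card = m := hT.2
    have hKI : K ≤ (Uf.image Prod.fst).card := by rw [hIcard]; exact hKu
    have hsum1 : (K:ℝ) * ((m:ℝ) - (K:ℝ)*ℓ) ≤ ((∑ i, ∑ j, cfun Uf T i j : ℕ) : ℝ) := by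
      have h1 := sum_td_ge Uf T K hKI
      rw [hTm] at h1
      have h2 : ((∑ j, tfun T j * dfun Uf j : ℕ):ℝ) ≤ ((∑ i, ∑ j, cfun Uf T i j : ℕ):ℝ) := by
        exact_mod_cast cfun_sum_ge Uf T
      linarith
    rw [count_prod Uf T]
    have hF0 : (0:ℝ) < (Nat.factorial ℓ : ℝ) := by exact_mod_cast Nat.factorial_pos ℓ
    have hdist : ∏ i, ∏ j, (Real.exp (-(cfun Uf T i j : ℝ)/ℓ) * (Nat.factorial ℓ : ℝ))
        = (∏ i, ∏ j, Real.exp (-(cfun Uf T i j : ℝ)/ℓ)) * ((Nat.factorial ℓ : ℝ))^(n*n) := by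
      have h1 : ∀ i : Fin n, ∏ j, (Real.exp (-(cfun Uf T i j : ℝ)/ℓ) * (Nat.factorial ℓ : ℝ))
          = (∏ j, Real.exp (-(cfun Uf T i j : ℝ)/ℓ)) * (Nat.factorial ℓ : ℝ)^n := by
        intro i
        rw [Finset.prod_mul_distrib, Finset.prod_const, Finset.card_univ, Fintype.card_fin]
      rw [Finset.prod_congr rfl (fun i _ => h1 i), Finset.prod_mul_distrib,
        Finset.prod_const, Finset.card_univ, Fintype.card_fin, ← pow_mul]
    have hexp : ∏ i, ∏ j, Real.exp (-(cfun Uf T i j : ℝ)/ℓ)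
        = Real.exp (∑ i, ∑ j, -(cfun Uf T i j : ℝ)/ℓ) := by
      rw [Real.exp_sum]
      exact Finset.prod_congr rfl fun i _ => (Real.exp_sum _ _).symm
    have harg : ∑ i, ∑ j, -(cfun Uf T i j : ℝ)/ℓ
        = -(((∑ i, ∑ j, cfun Uf T i j : ℕ) : ℝ))/ℓ := by
      push_cast
      simp only [div_eq_mul_inv, ← Finset.sum_mul, Finset.sum_neg_distrib]
    have hDcast : (D:ℝ) = ((Nat.factorial ℓ : ℝ))^(n*n) := by
      rw [hDval]; push_cast; ring
    calc ((∏ i, ∏ j, (Afin Uf T i j).card : ℕ) : ℝ)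
        = ∏ i, ∏ j, ((Afin Uf T i j).card : ℝ) := by push_cast; rfl
      _ ≤ ∏ i, ∏ j, (Real.exp (-(cfun Uf T i j : ℝ)/ℓ) * (Nat.factorial ℓ : ℝ)) := by
          apply Finset.prod_le_prod
          · intro i _
            apply Finset.prod_nonneg
            intro j _
            positivity
          · intro i _
            apply Finset.prod_le_prod
            · intro j _
              positivity
            · intro j _
              exact Afin_card_le hℓ0 Uf T i j
      _ = Real.exp (∑ i, ∑ j, -(cfun Uf T i j : ℝ)/ℓ) * ((Nat.factorial ℓ : ℝ))^(n*n) := by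
          rw [hdist, hexp]
      _ ≤ Real.exp (-((K:ℝ) * ((m:ℝ) - (K:ℝ)*ℓ)) / ℓ) * ((Nat.factorial ℓ : ℝ))^(n*n) := by
          apply mul_le_mul_of_nonneg_right _ (by positivity)
          apply Real.exp_le_exp.mpr
          rw [harg]
          have hnum : (-(((∑ i, ∑ j, cfun Uf T i j : ℕ)) : ℝ))
              ≤ -((K:ℝ) * ((m:ℝ) - (K:ℝ)*ℓ)) := by linarith
          exact div_le_div_of_nonneg_right hnum hℓR.le
      _ = Real.exp (-((K:ℝ) * ((m:ℝ) - (K:ℝ)*ℓ)) / ℓ) * D := by rw [hDcast]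
  -- Step 3: assemble
  have hcard : ((@Finset.filter _
        (fun σ : Fin n → Fin n → Equiv.Perm (Fin ℓ) =>
          ((nbhdSet (liftGraph n ℓ σ) U ∩ V).ncard : ℝ) < γ * n * ℓ)
        (Classical.decPred _) Finset.univ).card : ℝ)
      ≤ (𝒯.card : ℝ) * (Real.exp (-((K:ℝ) * ((m:ℝ) - (K:ℝ)*ℓ)) / ℓ) * D) := by
    calc ((@Finset.filter _ _ (Classical.decPred _) Finset.univ).card : ℝ)
        ≤ ((𝒯.biUnion (fun T => Finset.univ.filter
            (fun σ : Fin n → Fin n → Equiv.Perm (Fin ℓ) =>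
              ∀ i j, σ i j ∈ Afin Uf T i j))).card : ℝ) := by
          exact_mod_cast Nat.cast_le.mpr (Finset.card_le_card hsub)
      _ ≤ ((∑ T ∈ 𝒯, (Finset.univ.filter
            (fun σ : Fin n → Fin n → Equiv.Perm (Fin ℓ) =>
              ∀ i j, σ i j ∈ Afin Uf T i j)).card : ℕ) : ℝ) := by
          exact_mod_cast Finset.card_biUnion_le
      _ = ∑ T ∈ 𝒯, ((Finset.univ.filter
            (fun σ : Fin n → Fin n → Equiv.Perm (Fin ℓ) =>
              ∀ i j, σ i j ∈ Afin Uf T i j)).card : ℝ) := by push_cast; rfl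
      _ ≤ ∑ T ∈ 𝒯, Real.exp (-((K:ℝ) * ((m:ℝ) - (K:ℝ)*ℓ)) / ℓ) * D :=
          Finset.sum_le_sum hperT
      _ = (𝒯.card : ℝ) * (Real.exp (-((K:ℝ) * ((m:ℝ) - (K:ℝ)*ℓ)) / ℓ) * D) := by
          rw [Finset.sum_const, nsmul_eq_mul]
  have h𝒯card : (𝒯.card : ℝ) ≤ 2 ^ (n * ℓ) := by
    rw [h𝒯, Finset.card_powersetCard]
    have h1 : Vf.card.choose m ≤ 2 ^ Vf.card := choose_le_two_pow _ _
    have h2 : Vf.card ≤ n * ℓ := by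
      have := Finset.card_le_univ Vf
      simpa [Fintype.card_prod] using this
    have h3 : (2:ℕ) ^ Vf.card ≤ 2 ^ (n*ℓ) := Nat.pow_le_pow_right (by norm_num) h2
    exact_mod_cast le_trans h1 h3
  -- final numeric bound
  have hfinal : (2:ℝ) ^ (n*ℓ) * Real.exp (-((K:ℝ) * ((m:ℝ) - (K:ℝ)*ℓ)) / ℓ)
      ≤ Real.exp (-γ ^ 3 * n * u / 4) := by
    have hlog2 : Real.log 2 ≤ 1 := by
      have h := Real.log_le_sub_one_of_pos (show (0:ℝ) < 2 by norm_num)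
      linarith
    have hlog2' : 0 ≤ Real.log 2 := Real.log_nonneg (by norm_num)
    have hKmain : (n:ℝ)*ℓ*Real.log 2 + γ^3*n*u/4 ≤ (K:ℝ)*((m:ℝ) - K*ℓ)/ℓ := by
      rw [le_div_iff₀ hℓR]
      have hγnu : (0:ℝ) ≤ γ*n*u := by positivity
      by_cases hcase : M ≤ u
      · have hKM : K = M := min_eq_right hcase
        have hKR : 2*γ*n ≤ (K:ℝ) := by rw [hKM]; exact hMR
        have hKR2 : (K:ℝ) ≤ 2*γ*n + 1 := by
          rw [hKM, hM]
          have h := Nat.ceil_lt_add_one (show (0:ℝ) ≤ 2*γ*n by positivity)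
          linarith
        have hstep1 : (2*γ*n - 1)*ℓ ≤ (m:ℝ) - K*ℓ := by nlinarith [hmR, hKR2, hℓR]
        have hstep0 : (0:ℝ) ≤ (2*γ*n-1)*ℓ := by nlinarith [hγn, hℓR]
        have hprod : (2*γ*n)*((2*γ*n-1)*ℓ) ≤ (K:ℝ)*((m:ℝ)-K*ℓ) :=
          mul_le_mul hKR hstep1 hstep0 (by positivity)
        have e1 : (n:ℝ)*ℓ*Real.log 2 ≤ γ^2*n^2/4 := by
          nlinarith [hlog2, hℓγ, hn0R, hℓR, mul_nonneg hn0R.le hℓR.le]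
        have e2a : γ^3*n*u ≤ γ^3*n*n :=
          mul_le_mul_of_nonneg_left huNR (by positivity)
        have e2b : γ*(γ^2*n^2) ≤ (1/2)*(γ^2*n^2) :=
          mul_le_mul_of_nonneg_right hγ (by positivity)
        have e2 : γ^3*n*u/4 ≤ γ^2*n^2/8 := by nlinarith [e2a, e2b]
        have e3 : 2*γ*n ≤ γ^2*n^2/8 := by nlinarith [hγn, mul_pos hγ0 hn0R]
        calc ((n:ℝ)*ℓ*Real.log 2 + γ^3*n*u/4)*ℓ
            ≤ ((2*γ*n)*(2*γ*n-1))*ℓ := by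
              apply mul_le_mul_of_nonneg_right _ hℓR.le
              nlinarith [e1, e2, e3]
          _ = (2*γ*n)*((2*γ*n-1)*ℓ) := by ring
          _ ≤ (K:ℝ)*((m:ℝ)-K*ℓ) := hprod
      · have hKu' : K = u := min_eq_left (le_of_lt (lt_of_not_ge hcase))
        have huM : (u:ℝ) < 2*γ*n := by
          have h := lt_of_not_ge hcase
          rw [hM] at h
          exact Nat.lt_ceil.mp h
        have hstep1 : 2*γ*n*ℓ ≤ (m:ℝ) - (u:ℝ)*ℓ := by
          nlinarith [hmR, huM, hℓR]
        have hprod : (u:ℝ)*(2*γ*n*ℓ) ≤ (K:ℝ)*((m:ℝ)-K*ℓ) := by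
          rw [hKu']
          exact mul_le_mul_of_nonneg_left hstep1 (Nat.cast_nonneg u)
        have e1a : (n:ℝ)*(2*ℓ) ≤ (n:ℝ)*(γ*u) :=
          mul_le_mul_of_nonneg_left huℓ hn0R.le
        have e1b : ((n:ℝ)*ℓ)*Real.log 2 ≤ ((n:ℝ)*ℓ)*1 :=
          mul_le_mul_of_nonneg_left hlog2 (by positivity)
        have e1 : (n:ℝ)*ℓ*Real.log 2 ≤ γ*n*u/2 := by nlinarith [e1a, e1b]
        have e2c : γ*γ ≤ (1/2)*(1/2) :=
          mul_le_mul hγ hγ hγ0.le (by norm_num)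
        have e2d : (γ*γ)*(γ*n*u) ≤ (1/4)*(γ*n*u) := by
          nlinarith [e2c, hγnu]
        have e2 : γ^3*n*u/4 ≤ γ*n*u/16 := by nlinarith [e2d]
        calc ((n:ℝ)*ℓ*Real.log 2 + γ^3*n*u/4)*ℓ
            ≤ ((2*γ*n)*u)*ℓ := by
              apply mul_le_mul_of_nonneg_right _ hℓR.le
              nlinarith [e1, e2, hγnu]

          _ = (u:ℝ)*(2*γ*n*ℓ) := by ring
          _ ≤ (K:ℝ)*((m:ℝ)-K*ℓ) := hprod
    have h2exp : (2:ℝ)^(n*ℓ) = Real.exp (Real.log 2 * ((n*ℓ:ℕ):ℝ)) := by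
      rw [← Real.rpow_natCast (2:ℝ) (n*ℓ), Real.rpow_def_of_pos (by norm_num)]
    rw [h2exp, ← Real.exp_add]
    apply Real.exp_le_exp.mpr
    push_cast
    rw [neg_div]
    have : (n:ℝ)*ℓ*Real.log 2 = Real.log 2 * ((n:ℝ)*ℓ) := by ring
    linarith [hKmain]
  -- conclude
  rw [liftProb, hUU]
  rw [div_le_iff₀ hD0]
  calc ((@Finset.filter _ _ (Classical.decPred _) Finset.univ).card : ℝ)
      ≤ (𝒯.card : ℝ) * (Real.exp (-((K:ℝ) * ((m:ℝ) - (K:ℝ)*ℓ)) / ℓ) * D) := hcard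
    _ ≤ (2:ℝ)^(n*ℓ) * (Real.exp (-((K:ℝ) * ((m:ℝ) - (K:ℝ)*ℓ)) / ℓ) * D) := by
        apply mul_le_mul_of_nonneg_right h𝒯card (by positivity)
    _ = ((2:ℝ)^(n*ℓ) * Real.exp (-((K:ℝ) * ((m:ℝ) - (K:ℝ)*ℓ)) / ℓ)) * D := by ring
    _ ≤ Real.exp (-γ ^ 3 * n * u / 4) * D := by
        apply mul_le_mul_of_nonneg_right hfinal (le_of_lt hD0)
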